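/- arXiv:2406.16405 — 4 statements merged into one kernel-verified Lean document; each statement's English description precedes it below -/
import Mathlib

section
/- The number of Dyck-like words of length (p+1)n with n ones, in which every prefix has at least p times as many zeros as ones, equals C((p+1)n, n)/(pn+1) (the Pfaff–Fuss–Catalan number). -/
def prefOK (p : ℕ) (w : List Bool) : Prop :=
  ∀ u v : List Bool, w = u ++ v → p * u.count true ≤ u.count false

namespace FussAux

/-- The set of words with `a` falses, `b` trues, satisfying the prefix condition. -/
def S (p a b : ℕ) : Set (List Bool) :=
  {w | w.count false = a ∧ w.count true = b ∧ prefOK p w}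

lemma count_add (w : List Bool) : w.count true + w.count false = w.length := by
  induction w with
  | nil => simp
  | cons x t ih => cases x <;> simp [List.count_cons] <;> omega

lemma S_finite (p a b : ℕ) : (S p a b).Finite := by
  apply (List.finite_length_eq Bool (a + b)).subset
  rintro w ⟨hf, ht, -⟩
  simp only [Set.mem_setOf_eq]
  rw [← count_add, hf, ht, Nat.add_comm]

lemma prefOK_of_all_false {p : ℕ} {w : List Bool} (h : w.count true = 0) : prefOK p w := by
  intro u v huv
  have : u.count true = 0 := by
    have h2 := h
    rw [huv, List.count_append] at h2
    omega
  simp [this]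

lemma prefOK_zero (w : List Bool) : prefOK 0 w := by
  intro u v huv; simp

lemma S_b_zero (p a : ℕ) : S p a 0 = {List.replicate a false} := by
  ext w
  simp only [S, Set.mem_setOf_eq, Set.mem_singleton_iff]
  constructor
  · rintro ⟨hf, ht, -⟩
    have hall : ∀ x ∈ w, x = false := by
      intro x hx
      cases x
      · rfl
      · exact absurd hx (List.count_eq_zero.mp ht)
    have hlen : w.length = a := by
      have := count_add w; omega
    rw [List.eq_replicate_iff]
    exact ⟨hlen, hall⟩
  · rintro rfl
    refine ⟨?_, ?_, prefOK_of_all_false ?_⟩ <;>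
      simp [List.count_replicate]

lemma S_a_zero (b : ℕ) : S 0 0 b = {List.replicate b true} := by
  ext w
  simp only [S, Set.mem_setOf_eq, Set.mem_singleton_iff]
  constructor
  · rintro ⟨hf, ht, -⟩
    have hall : ∀ x ∈ w, x = true := by
      intro x hx
      cases x
      · exact absurd hx (List.count_eq_zero.mp hf)
      · rfl
    have hlen : w.length = b := by
      have := count_add w; omega
    rw [List.eq_replicate_iff]
    exact ⟨hlen, hall⟩
  · rintro rfl
    exact ⟨by simp [List.count_replicate], by simp [List.count_replicate], prefOK_zero _⟩

lemma S_empty (p a b : ℕ) (h : a < p * b) : S p a b = ∅ := by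
  ext w
  simp only [S, Set.mem_setOf_eq, Set.mem_empty_iff_false, iff_false]
  rintro ⟨hf, ht, hp⟩
  have h2 := hp w [] (by simp)
  rw [hf, ht] at h2
  omega

lemma prefOK_concat {p : ℕ} {w : List Bool} (x : Bool) (hw : prefOK p w)
    (hlast : p * ((w ++ [x]).count true) ≤ (w ++ [x]).count false) :
    prefOK p (w ++ [x]) := by
  intro u v huv
  rcases v.eq_nil_or_concat' with rfl | ⟨v', y, rfl⟩
  · rw [List.append_nil] at huv
    rw [← huv]
    exact hlast
  · rw [← List.append_assoc] at huv
    obtain ⟨h1, -⟩ := List.append_inj' huv rfl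
    exact hw u v' h1

lemma prefOK_of_concat {p : ℕ} {w : List Bool} {x : Bool} (hw : prefOK p (w ++ [x])) :
    prefOK p w := by
  intro u v huv
  exact hw u (v ++ [x]) (by rw [huv, List.append_assoc])

lemma S_rec (p a b : ℕ) (h : p * (b + 1) ≤ a + 1) :
    S p (a + 1) (b + 1) =
      (fun w => w ++ [false]) '' S p a (b + 1) ∪ (fun w => w ++ [true]) '' S p (a + 1) b := by
  ext w
  simp only [S, Set.mem_setOf_eq, Set.mem_union, Set.mem_image]
  constructor
  · rintro ⟨hf, ht, hp⟩
    have hw : w ≠ [] := by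
      rintro rfl; simp at hf
    rcases w.eq_nil_or_concat' with rfl | ⟨w', x, rfl⟩
    · exact absurd rfl hw
    cases x with
    | false =>
      left
      refine ⟨w', ⟨?_, ?_, prefOK_of_concat hp⟩, rfl⟩
      · rw [List.count_append] at hf; simp at hf; omega
      · rw [List.count_append] at ht; simpa using ht
    | true =>
      right
      refine ⟨w', ⟨?_, ?_, prefOK_of_concat hp⟩, rfl⟩
      · rw [List.count_append] at hf; simpa using hf
      · rw [List.count_append] at ht; simp at ht; omega
  · rintro (⟨w', ⟨hf, ht, hp⟩, rfl⟩ | ⟨w', ⟨hf, ht, hp⟩, rfl⟩)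
    · have hf' : (w' ++ [false]).count false = a + 1 := by
        rw [List.count_append]; simp [hf]
      have ht' : (w' ++ [false]).count true = b + 1 := by
        rw [List.count_append]; simpa using ht
      exact ⟨hf', ht', prefOK_concat false hp (by rw [hf', ht']; exact h)⟩
    · have hf' : (w' ++ [true]).count false = a + 1 := by
        rw [List.count_append]; simpa using hf
      have ht' : (w' ++ [true]).count true = b + 1 := by
        rw [List.count_append]; simp [ht]
      exact ⟨hf', ht', prefOK_concat true hp (by rw [hf', ht']; exact h)⟩

lemma concat_inj (x : Bool) : Function.Injective (fun w : List Bool => w ++ [x]) := by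
  intro w1 w2 h
  simpa using h

lemma ncard_rec (p a b : ℕ) (h : p * (b + 1) ≤ a + 1) :
    (S p (a + 1) (b + 1)).ncard = (S p a (b + 1)).ncard + (S p (a + 1) b).ncard := by
  rw [S_rec p a b h]
  rw [Set.ncard_union_eq ?disj ((S_finite p a (b+1)).image _) ((S_finite p (a+1) b).image _)]
  · rw [Set.ncard_image_of_injective _ (concat_inj false),
      Set.ncard_image_of_injective _ (concat_inj true)]
  case disj =>
    rw [Set.disjoint_left]
    rintro w ⟨w1, -, rfl⟩ ⟨w2, -, h2⟩
    obtain ⟨-, h3⟩ := List.append_inj' h2 rfl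
    simp at h3

lemma main (p : ℕ) : ∀ m a b, a + b = m → p * b ≤ a →
    (S p a b).ncard + p * Nat.choose (a + b) (a + 1) = Nat.choose (a + b) b := by
  intro m
  induction m with
  | zero =>
    intro a b hab _
    obtain ⟨rfl, rfl⟩ : a = 0 ∧ b = 0 := by omega
    simp [S_b_zero]
  | succ m ih =>
    intro a b hab h
    cases b with
    | zero =>
      simp [S_b_zero]
    | succ b' =>
      cases a with
      | zero =>
        have hp : p = 0 := by
          rcases Nat.mul_eq_zero.mp (Nat.le_zero.mp h) with h' | h'
          · exact h'
          · omega
        subst hp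
        rw [S_a_zero]
        simp
      | succ a' =>
        rw [ncard_rec p a' b' h]
        have e1 : a' + 1 + (b' + 1) = (a' + b' + 1) + 1 := by omega
        rw [e1]
        have pas1 : ((a' + b' + 1) + 1).choose (b' + 1) =
            (a' + b' + 1).choose b' + (a' + b' + 1).choose (b' + 1) :=
          Nat.choose_succ_succ' (a' + b' + 1) b'
        have pas2 : ((a' + b' + 1) + 1).choose (a' + 1 + 1) =
            (a' + b' + 1).choose (a' + 1) + (a' + b' + 1).choose (a' + 1 + 1) :=
          Nat.choose_succ_succ' (a' + b' + 1) (a' + 1)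
        rw [pas1, pas2, Nat.mul_add]
        by_cases h' : p * (b' + 1) ≤ a'
        · have ih1 := ih a' (b' + 1) (by omega) h'
          have ih2 := ih (a' + 1) b' (by omega)
            (le_trans (Nat.mul_le_mul_left p (Nat.le_succ b')) (le_trans h' (Nat.le_succ a')))
          rw [show a' + (b' + 1) = a' + b' + 1 from by omega] at ih1
          rw [show a' + 1 + b' = a' + b' + 1 from by omega] at ih2
          omega
        · -- p * (b'+1) = a' + 1
          have heq : p * (b' + 1) = a' + 1 := le_antisymm h (by omega)
          have h0 : (S p a' (b' + 1)).ncard = 0 := by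
            rw [S_empty p a' (b' + 1) (by omega)]; simp
          have hb : p * b' ≤ a' + 1 := by
            have hx : p * b' + p = p * (b' + 1) := by ring
            omega
          have ih2 := ih (a' + 1) b' (by omega) hb
          rw [show a' + 1 + b' = a' + b' + 1 from by omega] at ih2
          -- key identity : p * C(a'+b'+1, a'+1) = C(a'+b'+1, a')
          have key : p * (a' + b' + 1).choose (a' + 1) = (a' + b' + 1).choose a' := by
            have h1 := Nat.choose_succ_right_eq (a' + b' + 1) a'
            rw [show a' + b' + 1 - a' = b' + 1 from by omega] at h1
            have h2 : (a' + b' + 1).choose (a' + 1) * (p * (b' + 1)) =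
                (a' + b' + 1).choose a' * (b' + 1) := by rw [heq]; exact h1
            have h3 : (p * (a' + b' + 1).choose (a' + 1)) * (b' + 1) =
                (a' + b' + 1).choose a' * (b' + 1) := by
              rw [← h2]; ring
            exact Nat.eq_of_mul_eq_mul_right (Nat.succ_pos b') h3
          have hsymm : (a' + b' + 1).choose (b' + 1) = (a' + b' + 1).choose a' := by
            rw [← Nat.choose_symm (show a' ≤ a' + b' + 1 from by omega),
              show a' + b' + 1 - a' = b' + 1 from by omega]
          omega

end FussAux

theorem card_C_fussCatalan (n p : ℕ) :
    Nat.card {w : List Bool // w.length = (p + 1) * n ∧ w.count true = n ∧ prefOK p w} =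
      ((p + 1) * n).choose n / (p * n + 1) := by
  classical
  have hexp : (p + 1) * n = p * n + n := by ring
  have hset : {w : List Bool | w.length = (p + 1) * n ∧ w.count true = n ∧ prefOK p w} =
      FussAux.S p (p * n) n := by
    ext w
    simp only [Set.mem_setOf_eq, FussAux.S]
    have hca := FussAux.count_add w
    constructor
    · rintro ⟨h1, h2, h3⟩
      exact ⟨by omega, h2, h3⟩
    · rintro ⟨h1, h2, h3⟩
      exact ⟨by omega, h2, h3⟩
  have hcard : Nat.card {w : List Bool // w.length = (p + 1) * n ∧ w.count true = n ∧ prefOK p w}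
      = (FussAux.S p (p * n) n).ncard := by
    rw [show {w : List Bool // w.length = (p + 1) * n ∧ w.count true = n ∧ prefOK p w} =
        ↥{w : List Bool | w.length = (p + 1) * n ∧ w.count true = n ∧ prefOK p w} from rfl,
      Nat.card_coe_set_eq, hset]
  rw [hcard]
  have hm := FussAux.main p (p * n + n) (p * n) n rfl le_rfl
  set N := p * n + n with hN
  rw [hexp]
  have h1 := Nat.choose_succ_right_eq N (p * n)
  rw [show N - p * n = n from by omega] at h1
  have hsymm : N.choose (p * n) = N.choose n := by
    rw [← Nat.choose_symm (show n ≤ N from by omega), show N - n = p * n from by omega]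
  rw [hsymm] at h1
  -- h1 : C(N, pn+1) * (pn+1) = C(N,n) * n
  have hmul : (FussAux.S p (p * n) n).ncard * (p * n + 1) = N.choose n := by
    have e : ((FussAux.S p (p * n) n).ncard + p * N.choose (p * n + 1)) * (p * n + 1) =
        N.choose n * (p * n + 1) := by rw [hm]
    have e2 : p * N.choose (p * n + 1) * (p * n + 1) = p * n * N.choose n := by
      calc p * N.choose (p * n + 1) * (p * n + 1)
          = p * (N.choose (p * n + 1) * (p * n + 1)) := by ring
        _ = p * (N.choose n * n) := by rw [h1]
        _ = p * n * N.choose n := by ring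
    have e3 : N.choose n * (p * n + 1) = p * n * N.choose n + N.choose n := by ring
    rw [Nat.add_mul, e2, e3] at e
    omega
  rw [← hmul]
  rw [Nat.mul_div_cancel _ (Nat.succ_pos (p * n))]
end

section
/- If a list L of binary words of the same length and weight is a homogeneous Gray code (each consecutive pair differs by transposing a 1 and a 0 with no 1's between them) and is suffix partitioned (words sharing a common suffix appear consecutively), then L is recursive tail partitioned. -/
/-- Result of transposing positions `i` (a `1`) and `j` (a `0`). -/
def applyT (w : List Bool) (i j : ℕ) : List Bool := (w.set i false).set j true

/-- `(i, j)` is a homogeneous transposition for `w`: position `i` holds a `1`,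
position `j` holds a `0`, and every position strictly between them holds a `0`. -/
def okT (w : List Bool) (i j : ℕ) : Prop :=
  i < w.length ∧ j < w.length ∧ w.getD i false = true ∧ w.getD j false = false ∧
    ∀ t, min i j < t → t < max i j → w.getD t false = false

/-- Two words differ by a homogeneous transposition. -/
def homTrans (w w' : List Bool) : Prop :=
  ∃ i j, okT w i j ∧ w' = applyT w i j

/-- Words sharing a common suffix occupy consecutive positions in the list. -/
def suffixPartitioned (L : List (List Bool)) : Prop :=
  ∀ s : List Bool, ∀ i j k : ℕ, i ≤ j → j ≤ k → k < L.length →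
    s <:+ L.getD i [] → s <:+ L.getD k [] → s <:+ L.getD j []

/-- The number of trailing `1`'s of a word. -/
def trailOnes (w : List Bool) : ℕ := (w.reverse.takeWhile (· == true)).length

/-- The tail of a word: its unique suffix of the form `0 1^u`, when it exists. -/
def tail? (w : List Bool) : Option (List Bool) :=
  if false ∈ w then some (false :: List.replicate (trailOnes w) true) else none

/-- Words with shorter tails come first (among words having a tail). -/
def incTP (L : List (List Bool)) : Prop :=
  ∀ i j : ℕ, i ≤ j → j < L.length → false ∈ L.getD i [] → false ∈ L.getD j [] →
    trailOnes (L.getD i []) ≤ trailOnes (L.getD j [])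

/-- Words with longer tails come first (among words having a tail). -/
def decTP (L : List (List Bool)) : Prop :=
  ∀ i j : ℕ, i ≤ j → j < L.length → false ∈ L.getD i [] → false ∈ L.getD j [] →
    trailOnes (L.getD j []) ≤ trailOnes (L.getD i [])

/-- Recursive tail partitioned lists. -/
inductive RTP : List (List Bool) → Prop
  | nil : RTP []
  | mk (L : List (List Bool)) (h : incTP L ∨ decTP L)
      (hrec : ∀ t : List Bool,
        RTP (((L.filter fun w => decide (tail? w = some t)).map
          fun w => w.take (w.length - t.length)))) : RTP L




lemma trailOnes_concat (a : List Bool) (u : ℕ) :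
    trailOnes (a ++ false :: List.replicate u true) = u := by
  unfold trailOnes
  rw [List.reverse_append]
  simp [List.takeWhile_append, List.takeWhile_replicate]

lemma trailOnes_le (w : List Bool) : trailOnes w ≤ w.length := by
  unfold trailOnes
  calc _ ≤ w.reverse.length := (List.takeWhile_prefix _).length_le
  _ = w.length := by simp

lemma decomp (w : List Bool) (hf : false ∈ w) :
    ∃ a, w = a ++ false :: List.replicate (trailOnes w) true := by
  set r := w.reverse with hr
  have hrw : w = r.reverse := by simp [hr]
  have hsplit : r = r.takeWhile (· == true) ++ r.dropWhile (· == true) :=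
    List.takeWhile_append_dropWhile.symm
  have htw : r.takeWhile (· == true) = List.replicate (trailOnes w) true := by
    apply List.eq_replicate_of_mem
    intro b hb
    have := List.mem_takeWhile_imp hb
    simpa using this
  have hdne : r.dropWhile (· == true) ≠ [] := by
    intro h
    rw [h, List.append_nil] at hsplit
    have : false ∈ r := by simp [hr, hf]
    rw [hsplit, htw] at this
    simp at this
  have hhead : r.dropWhile (· == true) = false :: (r.dropWhile (· == true)).tail := by
    have h1 := List.head_dropWhile_not (· == true) (l := r) hdne
    have h2 : (r.dropWhile (· == true)).head hdne = false := by simpa using h1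
    rw [← h2]
    exact (List.cons_head_tail hdne).symm
  refine ⟨(r.dropWhile (· == true)).tail.reverse, ?_⟩
  conv_lhs => rw [hrw, hsplit, htw, hhead]
  simp

lemma length_applyT (w : List Bool) (i j : ℕ) : (applyT w i j).length = w.length := by
  simp [applyT]

lemma S2 (w : List Bool) {p : ℕ} (h1 : w.length - trailOnes w ≤ p) (h2 : p < w.length) :
    w.getD p false = true := by
  by_cases hf : false ∈ w
  · obtain ⟨a, ha⟩ := decomp w hf
    generalize hu : trailOnes w = u at ha h1
    subst ha
    have hlen : (a ++ false :: List.replicate u true).length = a.length + (u + 1) := by simp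
    have hp : a.length < p := by omega
    have hcase : p - a.length = (p - a.length - 1) + 1 := by omega
    rw [List.getD_append_right _ _ _ _ (by omega), hcase, List.getD_cons_succ,
      List.getD_eq_getElem _ _ (by simp; omega), List.getElem_replicate]
  · rw [List.getD_eq_getElem _ _ h2]
    have := List.getElem_mem (l := w) (n := p) h2
    cases hw : w[p] with
    | false => exact absurd (hw ▸ this) hf
    | true => rfl

lemma S1 (w : List Bool) (hf : false ∈ w) :
    trailOnes w < w.length ∧ w.getD (w.length - trailOnes w - 1) false = false := by
  obtain ⟨a, ha⟩ := decomp w hf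
  generalize hu : trailOnes w = u at ha ⊢
  subst ha
  have hlen : (a ++ false :: List.replicate u true).length = a.length + (u + 1) := by simp
  constructor
  · omega
  · have hidx : (a ++ false :: List.replicate u true).length - u - 1 = a.length := by omega
    rw [hidx, List.getD_eq_getElem _ _ (by omega), List.getElem_append_right (by omega)]
    simp

lemma suffix_of (w : List Bool) (hf : false ∈ w) :
    (false :: List.replicate (trailOnes w) true) <:+ w := by
  obtain ⟨a, ha⟩ := decomp w hf
  exact ⟨a, ha.symm⟩

lemma suffix_to {w : List Bool} {u : ℕ} (h : (false :: List.replicate u true) <:+ w) :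
    false ∈ w ∧ trailOnes w = u := by
  obtain ⟨a, ha⟩ := h
  constructor
  · rw [← ha]; simp
  · rw [← ha]; exact trailOnes_concat a u

lemma getD_applyT_j (w : List Bool) (i j : ℕ) (hj : j < w.length) :
    (applyT w i j).getD j false = true := by
  rw [List.getD_eq_getElem _ _ (by simpa [applyT] using hj)]
  unfold applyT
  rw [List.getElem_set, if_pos rfl]

lemma getD_applyT_i (w : List Bool) (i j : ℕ) (hi : i < w.length) (hij : i ≠ j) :
    (applyT w i j).getD i false = false := by
  rw [List.getD_eq_getElem _ _ (by simpa [applyT] using hi)]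
  unfold applyT
  rw [List.getElem_set, if_neg (fun hc => hij hc.symm), List.getElem_set, if_pos rfl]

lemma getD_applyT_ne (w : List Bool) (i j p : ℕ) (hpi : p ≠ i) (hpj : p ≠ j) :
    (applyT w i j).getD p false = w.getD p false := by
  by_cases hp : p < w.length
  · rw [List.getD_eq_getElem _ _ (by simpa [applyT] using hp), List.getD_eq_getElem _ _ hp]
    unfold applyT
    rw [List.getElem_set, if_neg (fun hc => hpj hc.symm),
      List.getElem_set, if_neg (fun hc => hpi hc.symm)]
  · rw [List.getD_eq_default _ _ (by simp [applyT]; omega),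
      List.getD_eq_default _ _ (by omega)]

lemma okT_ne {w : List Bool} {i j : ℕ} (h : okT w i j) : i ≠ j := by
  intro he
  obtain ⟨_, _, h1, h2, _⟩ := h
  rw [he, h2] at h1
  exact Bool.false_ne_true h1

lemma homTrans_false_mem {w w' : List Bool} (h : homTrans w w') :
    false ∈ w' ∧ w'.length = w.length := by
  obtain ⟨i, j, hok, rfl⟩ := h
  have hij := okT_ne hok
  obtain ⟨hi, hj, hwi, hwj, hbet⟩ := hok
  have hlen := length_applyT w i j
  have hgi := getD_applyT_i w i j hi hij
  refine ⟨?_, hlen⟩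
  rw [List.getD_eq_getElem _ _ (by omega)] at hgi
  exact hgi ▸ List.getElem_mem _

lemma homTrans_up {w w' : List Bool} (h : homTrans w w') (hf : false ∈ w) :
    trailOnes w' ≤ trailOnes w + 1 := by
  obtain ⟨i, j, hok, rfl⟩ := h
  set w' := applyT w i j with hw'
  have hij := okT_ne hok
  obtain ⟨hi, hj, hwi, hwj, hbet⟩ := hok
  have hlen := length_applyT w i j
  set u := trailOnes w with hu
  set u' := trailOnes w' with hu'
  by_contra hcon
  push_neg at hcon
  have hule : u < w.length := (S1 w hf).1
  have hz := (S1 w hf).2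
  set n := w.length with hn
  have hlenw' : w'.length = n := length_applyT w i j
  have hu'le : u' ≤ n := by rw [hu']; rw [← hlenw']; exact trailOnes_le w'
  set z := n - u - 1 with hzdef
  -- z = j
  have hz1 : w'.getD z false = true := S2 w' (by omega) (by omega)
  have hzj : z = j := by
    by_contra hne
    by_cases hzi : z = i
    · rw [hzi, hwi] at hz; exact Bool.false_ne_true hz.symm
    · rw [getD_applyT_ne w i j z (by tauto) hne, hz] at hz1
      exact Bool.false_ne_true hz1
  have hz2 : w'.getD (z - 1) false = true := S2 w' (by omega) (by omega)
  have hiz1 : i ≠ z - 1 := by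
    intro he
    rw [← he] at hz2
    rw [getD_applyT_i w i j hi hij] at hz2
    exact Bool.false_ne_true hz2
  rcases lt_trichotomy i j with hlt | heq | hgt
  · -- i < j = z, i < z - 1, between at z - 1
    have hb := hbet (z - 1) (by omega) (by omega)
    rw [← getD_applyT_ne w i j (z-1) (by omega) (by omega), ← hw', hz2] at hb
    exact Bool.false_ne_true hb.symm
  · exact hij heq
  · -- i > j = z, so i ≥ n - u
    have : w'.getD i false = true := S2 w' (by omega) (by omega)
    rw [getD_applyT_i w i j hi hij] at this
    exact Bool.false_ne_true this

lemma homTrans_down {w w' : List Bool} (h : homTrans w w') (hf : false ∈ w) :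
    trailOnes w ≤ trailOnes w' + 1 := by
  have hf' := (homTrans_false_mem h).1
  obtain ⟨i, j, hok, rfl⟩ := h
  set w' := applyT w i j with hw'
  have hij := okT_ne hok
  obtain ⟨hi, hj, hwi, hwj, hbet⟩ := hok
  have hlen := length_applyT w i j
  set u := trailOnes w with hu
  set u' := trailOnes w' with hu'
  by_contra hcon
  push_neg at hcon
  have hule : u ≤ w.length := trailOnes_le w
  set n := w.length with hn
  have hlenw' : w'.length = n := length_applyT w i j
  have hu'lt : u' < n := by have := (S1 w' hf').1; omega
  have hz' := (S1 w' hf').2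
  rw [hlenw'] at hz'
  set z' := n - u' - 1 with hz'def
  -- z' = i
  have hz1 : w.getD z' false = true := S2 w (by omega) (by omega)
  have hz'i : z' = i := by
    by_contra hne
    by_cases hzj : z' = j
    · rw [hzj, hwj] at hz1; exact Bool.false_ne_true hz1
    · rw [getD_applyT_ne w i j z' hne hzj, hz1] at hz'
      exact Bool.false_ne_true hz'.symm
  -- j < n - u
  have hjlt : j < n - u := by
    by_contra hge
    push_neg at hge
    have := S2 w (p := j) (by omega) (by omega)
    rw [hwj] at this
    exact Bool.false_ne_true this
  -- between at z' - 1
  have hp : w.getD (z' - 1) false = true := S2 w (by omega) (by omega)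
  have hb := hbet (z' - 1) (by omega) (by omega)
  rw [hp] at hb
  exact Bool.false_ne_true hb.symm

lemma homTrans_drop_suffix {p p' t : List Bool}
    (h : homTrans (p ++ t) (p' ++ t)) (hlen : p'.length = p.length) :
    homTrans p p' := by
  obtain ⟨i, j, hok, heq⟩ := h
  obtain ⟨hi, hj, hwi, hwj, hbet⟩ := hok
  have hij : i ≠ j := okT_ne ⟨hi, hj, hwi, hwj, hbet⟩
  simp only [List.length_append] at hi hj
  have hilt : i < p.length := by
    by_contra hge
    push_neg at hge
    have h1 : (p ++ t).getD i false = t.getD (i - p.length) false :=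
      List.getD_append_right _ _ _ _ hge
    have h2 : (p' ++ t).getD i false = t.getD (i - p.length) false := by
      rw [List.getD_append_right _ _ _ _ (by omega), hlen]
    rw [heq, getD_applyT_i _ i j (by simp; omega) hij] at h2
    rw [hwi] at h1
    rw [← h1] at h2
    exact Bool.false_ne_true h2.symm.symm
  have hjlt : j < p.length := by
    by_contra hge
    push_neg at hge
    have h1 : (p ++ t).getD j false = t.getD (j - p.length) false :=
      List.getD_append_right _ _ _ _ hge
    have h2 : (p' ++ t).getD j false = t.getD (j - p.length) false := by
      rw [List.getD_append_right _ _ _ _ (by omega), hlen]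
    rw [heq, getD_applyT_j _ i j (by simp; omega)] at h2
    rw [hwj] at h1
    rw [← h1] at h2
    exact Bool.false_ne_true h2.symm
  refine ⟨i, j, ⟨hilt, hjlt, ?_, ?_, ?_⟩, ?_⟩
  · rw [← List.getD_append _ t false i hilt]; exact hwi
  · rw [← List.getD_append _ t false j hjlt]; exact hwj
  · intro s hs1 hs2
    rw [← List.getD_append _ t false s (by omega)]
    exact hbet s hs1 hs2
  · have hset : applyT (p ++ t) i j = applyT p i j ++ t := by
      unfold applyT
      rw [List.set_append, if_pos hilt, List.set_append, if_pos (by simpa using hjlt)]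
    rw [hset] at heq
    exact List.append_cancel_right heq


section Mono
variable {g : ℕ → ℤ} {M : ℕ}

lemma claim_up (hstep : ∀ i, i + 1 < M → g (i+1) ≤ g i + 1 ∧ g i ≤ g (i+1) + 1)
    (hcontig : ∀ i j k, i ≤ j → j ≤ k → k < M → g i = g k → g j = g i)
    {p : ℕ} (hp : p + 1 < M) (hup : g p < g (p+1)) :
    ∀ q, p < q → q < M → g p < g q := by
  intro q hq
  induction q, hq using Nat.le_induction with
  | base => intro _; exact hup
  | succ q hq ih =>
    intro hqM
    have hq1 : g q ≤ g (q+1) + 1 := (hstep q hqM).2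
    have hgq : g p < g q := ih (by omega)
    rcases lt_or_eq_of_le (show g p ≤ g (q+1) by omega) with h | h
    · exact h
    · exfalso
      have := hcontig p (p+1) (q+1) (by omega) (by omega) hqM h
      omega

lemma no_down_after_up (hstep : ∀ i, i + 1 < M → g (i+1) ≤ g i + 1 ∧ g i ≤ g (i+1) + 1)
    (hcontig : ∀ i j k, i ≤ j → j ≤ k → k < M → g i = g k → g j = g i)
    {p : ℕ} (hp : p + 1 < M) (hup : g p < g (p+1)) :
    ∀ r, p ≤ r → r + 1 < M → g r ≤ g (r+1) := by
  classical
  intro r hpr hrM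
  by_contra hdown
  push_neg at hdown
  rcases eq_or_lt_of_le hpr with rfl | hplt
  · omega
  have hv1 : g p < g (r+1) := claim_up hstep hcontig hp hup (r+1) (by omega) hrM
  have hv2 : g p < g r := claim_up hstep hcontig hp hup r hplt (by omega)
  have hP0 : g (p + 0) ≤ g (r+1) := by rw [Nat.add_zero]; omega
  have hPr : ¬ g (p + (r - p)) ≤ g (r+1) := by
    rw [show p + (r - p) = r by omega]; omega
  set P : ℕ → Prop := fun e => g (p + e) ≤ g (r+1) with hP
  have hdle : Nat.findGreatest P (r - p) ≤ r - p := Nat.findGreatest_le _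
  have hdP : P (Nat.findGreatest P (r - p)) := Nat.findGreatest_spec (Nat.zero_le _) hP0
  set d := Nat.findGreatest P (r - p) with hd
  have hdlt : d < r - p := by
    rcases lt_or_eq_of_le hdle with h | h
    · exact h
    · exact absurd (h ▸ hdP) hPr
  have hnext : ¬ P (d + 1) := Nat.findGreatest_is_greatest (n := r - p) (by omega) (by omega)
  have hdP' : g (p + d) ≤ g (r+1) := hdP
  have hnext' : ¬ g (p + d + 1) ≤ g (r+1) := by
    have : p + d + 1 = p + (d + 1) := by omega
    rw [this]; exact hnext
  push_neg at hnext'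
  have hstepq := hstep (p + d) (by omega)
  have := hcontig (p + d) (p + d + 1) (r+1) (by omega) (by omega) hrM (by omega)
  omega

lemma steps_mono (h : ∀ r, r + 1 < M → g r ≤ g (r+1)) :
    ∀ i j, i ≤ j → j < M → g i ≤ g j := by
  intro i j hij hj
  induction j with
  | zero =>
    have : i = 0 := by omega
    rw [this]
  | succ j ih =>
    rcases Nat.lt_or_ge i (j+1) with h' | h'
    · exact le_trans (ih (by omega) (by omega)) (h j hj)
    · have : i = j + 1 := by omega
      rw [this]

lemma mono_of_steps (hstep : ∀ i, i + 1 < M → g (i+1) ≤ g i + 1 ∧ g i ≤ g (i+1) + 1)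
    (hcontig : ∀ i j k, i ≤ j → j ≤ k → k < M → g i = g k → g j = g i) :
    (∀ i j, i ≤ j → j < M → g i ≤ g j) ∨ (∀ i j, i ≤ j → j < M → g j ≤ g i) := by
  have hstep' : ∀ i, i + 1 < M →
      (fun x => -g x) (i+1) ≤ (fun x => -g x) i + 1 ∧ (fun x => -g x) i ≤ (fun x => -g x) (i+1) + 1 := by
    intro i hi
    have := hstep i hi
    constructor <;> simp <;> omega
  have hcontig' : ∀ i j k, i ≤ j → j ≤ k → k < M →
      (fun x => -g x) i = (fun x => -g x) k → (fun x => -g x) j = (fun x => -g x) i := by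
    intro i j k h1 h2 h3 h4
    simp only [neg_inj] at h4 ⊢
    exact hcontig i j k h1 h2 h3 h4
  by_cases hex : ∃ p, p + 1 < M ∧ g p < g (p + 1)
  · left
    obtain ⟨p, hp, hup⟩ := hex
    apply steps_mono
    intro r hrM
    rcases le_or_gt p r with h | h
    · exact no_down_after_up hstep hcontig hp hup r h hrM
    · by_contra hdown
      push_neg at hdown
      have hdn : (fun x => -g x) r < (fun x => -g x) (r+1) := by simp; omega
      have := no_down_after_up hstep' hcontig' hrM hdn p (by omega) hp
      simp only [neg_le_neg_iff] at this
      omega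
  · right
    push_neg at hex
    intro i j hij hj
    have := steps_mono (g := fun x => -g x) (M := M) ?_ i j hij hj
    · simpa using this
    · intro r hrM
      simp only [neg_le_neg_iff]
      exact hex r hrM
end Mono


lemma filter_prefix {α : Type*} (P : α → Bool) :
    ∀ (L : List α),
    (∀ i j (hi : i < L.length) (hj : j < L.length), i ≤ j → P (L[j]) → P (L[i])) →
    L.filter P <+: L := by
  intro L
  induction L with
  | nil => intro _; simp
  | cons a L' ih =>
    intro h
    by_cases hPa : P a
    · rw [List.filter_cons_of_pos hPa, List.cons_prefix_cons]
      refine ⟨rfl, ih ?_⟩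
      intro i j hi hj hij hPj
      have := h (i+1) (j+1) (by simpa using hi) (by simpa using hj) (by omega)
      simp only [List.getElem_cons_succ] at this
      exact this hPj
    · rw [List.filter_cons_of_neg (by simpa using hPa)]
      have : L'.filter P = [] := by
        rw [List.filter_eq_nil_iff]
        intro b hb hPb
        obtain ⟨m, hm, hbm⟩ := List.getElem_of_mem hb
        have := h 0 (m+1) (by simp) (by simp; omega) (by omega)
        simp only [List.getElem_cons_succ, List.getElem_cons_zero] at this
        exact hPa (this (hbm ▸ hPb))
      rw [this]
      exact List.nil_prefix

lemma filter_infix {α : Type*} (P : α → Bool) :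
    ∀ (L : List α),
    (∀ i j k (hi : i < L.length) (hj : j < L.length) (hk : k < L.length),
      i ≤ j → j ≤ k → P (L[i]) → P (L[k]) → P (L[j])) →
    L.filter P <:+: L := by
  intro L
  induction L with
  | nil => intro _; simp
  | cons a L' ih =>
    intro h
    by_cases hPa : P a
    · rw [List.filter_cons_of_pos hPa]
      apply List.IsPrefix.isInfix
      rw [List.cons_prefix_cons]
      refine ⟨rfl, filter_prefix P L' ?_⟩
      intro i j hi hj hij hPj
      have := h 0 (i+1) (j+1) (by simp) (by simpa using hi) (by simpa using hj)
        (by omega) (by omega)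
      simp only [List.getElem_cons_succ, List.getElem_cons_zero] at this
      exact this hPa hPj
    · rw [List.filter_cons_of_neg (by simpa using hPa)]
      apply List.infix_cons
      apply ih
      intro i j k hi hj hk hij hjk hPi hPk
      have := h (i+1) (j+1) (k+1) (by simpa using hi) (by simpa using hj)
        (by simpa using hk) (by omega) (by omega)
      simp only [List.getElem_cons_succ] at this
      exact this hPi hPk


lemma suffix_append_append {α : Type*} {s a t : List α} (h : s <:+ a) :
    s ++ t <:+ a ++ t := by
  obtain ⟨q, rfl⟩ := h
  exact ⟨q, by simp⟩

lemma suffix_of_append_append {α : Type*} {s a t : List α} (h : s ++ t <:+ a ++ t) :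
    s <:+ a := by
  obtain ⟨q, hq⟩ := h
  rw [← List.append_assoc] at hq
  exact ⟨q, List.append_cancel_right hq⟩

lemma take_of_suffix {w t : List Bool} (h : t <:+ w) :
    w = w.take (w.length - t.length) ++ t := by
  obtain ⟨a, rfl⟩ := h
  have h1 : (a ++ t).length - t.length = a.length := by simp
  rw [h1, List.take_left]

lemma main_aux : ∀ n : ℕ, ∀ (k : ℕ) (L : List (List Bool)),
    (∀ w ∈ L, w.length = n) → (∀ w ∈ L, w.count true = k) →
    L.Nodup → L.Chain' homTrans → suffixPartitioned L → RTP L := by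
  intro n
  induction n using Nat.strong_induction_on with
  | _ n IH =>
  intro k L hlen hwt hnodup hgray hsp
  have hchain : ∀ idx, idx + 1 < L.length →
      homTrans (L.getD idx []) (L.getD (idx+1) []) := by
    intro idx hidx
    have h := List.isChain_iff_getElem.mp hgray idx (by omega)
    rw [List.getD_eq_getElem _ _ (by omega : idx < L.length),
      List.getD_eq_getElem _ _ (by omega : idx + 1 < L.length)]
    simpa using h
  have hfalse : ∀ idx, 1 ≤ idx → idx < L.length → false ∈ L.getD idx [] := by
    intro idx h1 h2
    have h := hchain (idx - 1) (by omega)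
    rw [show idx - 1 + 1 = idx by omega] at h
    exact (homTrans_false_mem h).1
  refine RTP.mk L ?_ ?_
  · -- incTP or decTP
    obtain ⟨s, hs1, hs2⟩ : ∃ s : ℕ,
        (∀ idx, s ≤ idx → idx < L.length → false ∈ L.getD idx []) ∧
        (∀ i, i < L.length → false ∈ L.getD i [] → s ≤ i) := by
      by_cases h0 : false ∈ L.getD 0 []
      · refine ⟨0, ?_, fun _ _ _ => Nat.zero_le _⟩
        intro idx _ h2
        rcases Nat.eq_zero_or_pos idx with rfl | hpos
        · exact h0
        · exact hfalse idx hpos h2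
      · refine ⟨1, fun idx h1 h2 => hfalse idx h1 h2, ?_⟩
        intro i hi hf
        rcases Nat.eq_zero_or_pos i with rfl | hpos
        · exact absurd hf h0
        · exact hpos
    set g : ℕ → ℤ := fun q => ((trailOnes (L.getD (s + q) []) : ℤ)) with hg
    have hstepg : ∀ q, q + 1 < L.length - s → g (q+1) ≤ g q + 1 ∧ g q ≤ g (q+1) + 1 := by
      intro q hq
      have hf : false ∈ L.getD (s + q) [] := hs1 _ (by omega) (by omega)
      have hch := hchain (s + q) (by omega)
      have h1 := homTrans_up hch hf
      have h2 := homTrans_down hch hf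
      simp only [hg, show s + (q+1) = s + q + 1 by omega]
      constructor <;> exact_mod_cast ‹_›
    have hcontigg : ∀ i j k', i ≤ j → j ≤ k' → k' < L.length - s →
        g i = g k' → g j = g i := by
      intro i j k' hij hjk hk' heq
      simp only [hg, Nat.cast_inj] at heq ⊢
      have hfi : false ∈ L.getD (s + i) [] := hs1 _ (by omega) (by omega)
      have hfk : false ∈ L.getD (s + k') [] := hs1 _ (by omega) (by omega)
      have hsufi := suffix_of _ hfi
      have hsufk := suffix_of _ hfk
      rw [← heq] at hsufk
      have hmid := hsp (false :: List.replicate (trailOnes (L.getD (s + i) [])) true)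
        (s + i) (s + j) (s + k') (by omega) (by omega) (by omega) hsufi hsufk
      exact (suffix_to hmid).2
    rcases mono_of_steps hstepg hcontigg with hmono | hmono
    · left
      intro i j hij hj hfi hfj
      have hsi : s ≤ i := hs2 i (by omega) hfi
      have hsj : s ≤ j := hs2 j hj hfj
      have h := hmono (i - s) (j - s) (by omega) (by omega)
      simp only [hg, show s + (i - s) = i by omega, show s + (j - s) = j by omega] at h
      exact_mod_cast h
    · right
      intro i j hij hj hfi hfj
      have hsi : s ≤ i := hs2 i (by omega) hfi
      have hsj : s ≤ j := hs2 j hj hfj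
      have h := hmono (i - s) (j - s) (by omega) (by omega)
      simp only [hg, show s + (i - s) = i by omega, show s + (j - s) = j by omega] at h
      exact_mod_cast h
  · -- recursive part
    intro t
    set P : List Bool → Bool := fun w => decide (tail? w = some t) with hP
    by_cases hB : L.filter P = []
    · rw [hB]
      exact RTP.nil
    -- B nonempty : extract witness
    obtain ⟨w0, hw0B⟩ := List.exists_mem_of_ne_nil _ hB
    have hw0 := List.mem_filter.mp hw0B
    have ht0 : tail? w0 = some t := of_decide_eq_true hw0.2
    have hf0 : false ∈ w0 := by
      by_contra hc
      rw [tail?, if_neg hc] at ht0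
      cases ht0
    have htform : t = false :: List.replicate (trailOnes w0) true := by
      rw [tail?, if_pos hf0] at ht0
      exact (Option.some_inj.mp ht0).symm
    have htw0 : t <:+ w0 := htform ▸ suffix_of w0 hf0
    have htlen1 : 1 ≤ t.length := by rw [htform]; simp
    have htlenn : t.length ≤ n := by
      have := htw0.length_le
      rwa [hlen w0 hw0.1] at this
    -- membership facts about the filtered list
    have hmemB : ∀ w ∈ L.filter P, w ∈ L ∧ t <:+ w := by
      intro w hw
      have h1 := List.mem_filter.mp hw
      have h2 : tail? w = some t := of_decide_eq_true h1.2
      have hfw : false ∈ w := by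
        by_contra hc
        rw [tail?, if_neg hc] at h2
        cases h2
      rw [tail?, if_pos hfw] at h2
      exact ⟨h1.1, (Option.some_inj.mp h2) ▸ suffix_of w hfw⟩
    -- contiguity of P along L, hence the filtered list is an infix
    have hinf : L.filter P <:+: L := by
      apply filter_infix
      intro i j k' hi hj hk' hij hjk hPi hPk
      have hti : tail? L[i] = some t := of_decide_eq_true hPi
      have htk : tail? L[k'] = some t := of_decide_eq_true hPk
      have hfi : false ∈ L[i] := by
        by_contra hc
        rw [tail?, if_neg hc] at hti
        cases hti
      have hfk : false ∈ L[k'] := by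
        by_contra hc
        rw [tail?, if_neg hc] at htk
        cases htk
      rw [tail?, if_pos hfi] at hti
      rw [tail?, if_pos hfk] at htk
      have hsufi : t <:+ L[i] := (Option.some_inj.mp hti) ▸ suffix_of _ hfi
      have hsufk : t <:+ L[k'] := (Option.some_inj.mp htk) ▸ suffix_of _ hfk
      have hmid := hsp t i j k' hij hjk hk'
        (by rwa [List.getD_eq_getElem _ _ hi]) (by rwa [List.getD_eq_getElem _ _ hk'])
      rw [List.getD_eq_getElem _ _ hj] at hmid
      rw [htform] at hmid
      obtain ⟨hfj, htrj⟩ := suffix_to hmid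
      rw [hP]
      apply decide_eq_true
      rw [tail?, if_pos hfj, htrj, ← htform]
    set B := L.filter P with hBdef
    have hchainB : B.Chain' homTrans := hgray.infix hinf
    have hnodupB : B.Nodup := hinf.sublist.nodup hnodup
    -- suffixPartitioned for B
    obtain ⟨l', r', hL⟩ := hinf
    have hlenL : l'.length + B.length + r'.length = L.length := by
      rw [← hL]; simp; omega
    have hgd : ∀ m, m < B.length → B.getD m [] = L.getD (l'.length + m) [] := by
      intro m hm
      rw [← hL, List.getD_append _ _ _ _ (by simp; omega),
        List.getD_append_right _ _ _ _ (by omega)]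
      congr 1
      omega
    have hspB : suffixPartitioned B := by
      intro s i j k' hij hjk hk' hsi hsk
      rw [hgd i (by omega)] at hsi
      rw [hgd k' (by omega)] at hsk
      rw [hgd j (by omega)]
      exact hsp s (l'.length + i) (l'.length + j) (l'.length + k')
        (by omega) (by omega) (by omega) hsi hsk
    -- properties of the prefix map
    set f : List Bool → List Bool := fun w => w.take (w.length - t.length) with hf
    have hdecomp : ∀ w ∈ B, w = f w ++ t := fun w hw => take_of_suffix (hmemB w hw).2
    have hflen : ∀ w ∈ B, (f w).length = n - t.length := by
      intro w hw
      have hwn : w.length = n := hlen w (hmemB w hw).1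
      simp only [hf, List.length_take]
      omega
    -- apply induction hypothesis
    apply IH (n - t.length) (by omega) (k - t.count true)
    · intro w' hw'
      obtain ⟨w, hw, rfl⟩ := List.mem_map.mp hw'
      exact hflen w hw
    · intro w' hw'
      obtain ⟨w, hw, rfl⟩ := List.mem_map.mp hw'
      have hcnt : w.count true = k := hwt w (hmemB w hw).1
      have hsplit : w.count true = (f w).count true + t.count true := by
        conv_lhs => rw [hdecomp w hw]
        rw [List.count_append]
      have htk : t.count true ≤ k := by omega
      omega
    · apply hnodupB.map_on ?_
      intro w1 hw1 w2 hw2 heq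
      rw [hdecomp w1 hw1, hdecomp w2 hw2, heq]
    · apply List.isChain_iff_getElem.mpr
      intro i hi
      simp only [List.length_map] at hi
      simp only [List.get_eq_getElem, List.getElem_map]
      have hstep := List.isChain_iff_getElem.mp hchainB i (by simpa using hi)
      apply homTrans_drop_suffix (t := t)
      · rw [← hdecomp B[i] (List.getElem_mem _), ← hdecomp B[i+1] (List.getElem_mem _)]
        exact hstep
      · rw [hflen B[i] (List.getElem_mem _), hflen B[i+1] (List.getElem_mem _)]
    · intro s i j k' hij hjk hk' hsi hsk
      simp only [List.length_map] at hk'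
      have hgdm : ∀ m, m < B.length → (B.map f).getD m [] = f (B.getD m []) := by
        intro m hm
        rw [List.getD_eq_getElem _ _ (by simpa using hm), List.getElem_map,
          List.getD_eq_getElem _ _ hm]
      have hmemD : ∀ m, m < B.length → B.getD m [] ∈ B := by
        intro m hm
        rw [List.getD_eq_getElem _ _ hm]
        exact List.getElem_mem _
      rw [hgdm i (by omega)] at hsi
      rw [hgdm k' (by omega)] at hsk
      rw [hgdm j (by omega)]
      have hsi' : s ++ t <:+ B.getD i [] := by
        conv_rhs => rw [hdecomp _ (hmemD i (by omega))]
        exact suffix_append_append hsi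
      have hsk' : s ++ t <:+ B.getD k' [] := by
        conv_rhs => rw [hdecomp _ (hmemD k' (by omega))]
        exact suffix_append_append hsk
      have hmid := hspB (s ++ t) i j k' hij hjk (by omega) hsi' hsk'
      rw [hdecomp _ (hmemD j (by omega))] at hmid
      exact suffix_of_append_append hmid



theorem homogeneous_suffixPartitioned_is_RTP (n k : ℕ) (L : List (List Bool))
    (hlen : ∀ w ∈ L, w.length = n) (hwt : ∀ w ∈ L, w.count true = k)
    (hnodup : L.Nodup) (hgray : L.Chain' homTrans) (hsp : suffixPartitioned L) :
    RTP L :=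
  main_aux n k L hlen hwt hnodup hgray hsp
end

section
/- For naturals n, k, p with p ≥ 1 and n ≥ (p+1)k, each word α_{n,k}^{i,j} = 0^{pj-i} 1^{j-1} 0^i 1 (0^p 1)^{k-j} 0^{n-(p+1)k}, for 0 ≤ i ≤ p-1 and 1 ≤ j ≤ k, belongs to C_n(p,k): it has length n, weight k, and every prefix contains at least p times as many zeros as ones. -/
/-- `α_{n,k}^{i,j} = 0^{pj-i} 1^{j-1} 0^i 1 (0^p 1)^{k-j} 0^{n-(p+1)k}` -/
def alphaC (n p k i j : ℕ) : List Bool :=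
  List.replicate (p * j - i) false ++ List.replicate (j - 1) true ++
    List.replicate i false ++ [true] ++
    (List.replicate (k - j) (List.replicate p false ++ [true])).flatten ++
    List.replicate (n - (p + 1) * k) false

lemma count_flatten_replicate (m : ℕ) (l : List Bool) (b : Bool) :
    ((List.replicate m l).flatten.count b) = m * l.count b := by
  induction m with
  | zero => simp
  | succ m ih =>
    rw [List.replicate_succ, List.flatten_cons, List.count_append, ih, Nat.succ_mul]
    ring

lemma eq_rep_of_pref {b : Bool} {m : ℕ} {u v : List Bool}
    (h : List.replicate m b = u ++ v) :
    u = List.replicate u.length b ∧ u.length ≤ m := by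
  have hlen : u.length ≤ m := by
    have := congrArg List.length h
    simp at this; omega
  have h2 := congrArg (List.take u.length) h
  rw [List.take_replicate, List.take_left, min_eq_left hlen] at h2
  exact ⟨h2.symm, hlen⟩

lemma prefOK_append_exact {p : ℕ} {x y : List Bool}
    (hx : prefOK p x) (hbal : x.count false = p * x.count true)
    (hy : prefOK p y) : prefOK p (x ++ y) := by
  intro u v h
  rcases List.append_eq_append_iff.mp h with ⟨a', hu, hy'⟩ | ⟨c', hx', hv⟩
  · subst hu
    rw [List.count_append, List.count_append, Nat.mul_add, hbal]
    exact Nat.add_le_add_left (hy a' v hy') _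
  · exact hx u c' hx'

lemma prefOK_append_false {p e : ℕ} {x : List Bool} (hx : prefOK p x) :
    prefOK p (x ++ List.replicate e false) := by
  intro u v h
  rcases List.append_eq_append_iff.mp h with ⟨a', hu, hrep⟩ | ⟨c', hx', hv⟩
  · subst hu
    obtain ⟨ha, _⟩ := eq_rep_of_pref hrep
    have hbase := hx x [] (by simp)
    rw [List.count_append, List.count_append, ha]
    simp [List.count_replicate]
    linarith
  · exact hx u c' hx'

lemma head_ok {p a b c : ℕ} (h1 : p * b ≤ a) (h2 : p * (b + 1) ≤ a + c) :
    prefOK p (List.replicate a false ++ (List.replicate b true ++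
      (List.replicate c false ++ [true]))) := by
  intro u v h
  rcases List.append_eq_append_iff.mp h with ⟨u1, hu, hA⟩ | ⟨c', hx, _⟩
  · subst hu
    rcases List.append_eq_append_iff.mp hA with ⟨u2, hu1, hB⟩ | ⟨c', hx, _⟩
    · subst hu1
      rcases List.append_eq_append_iff.mp hB with ⟨u3, hu2, hC⟩ | ⟨c', hx, _⟩
      · subst hu2
        rcases u3 with _ | ⟨x, u3⟩
        · simp [List.count_append, List.count_replicate]
          linarith
        · simp at hC
          obtain ⟨hx, hu3, hv⟩ := hC
          subst hx; subst hu3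
          simp [List.count_append, List.count_replicate]
          linarith
      · obtain ⟨hu2, hlen⟩ := eq_rep_of_pref hx
        rw [hu2]
        simp [List.count_append, List.count_replicate]
        linarith
    · obtain ⟨hu1, hlen⟩ := eq_rep_of_pref hx
      rw [hu1]
      simp [List.count_append, List.count_replicate]
      calc p * u1.length ≤ p * b := Nat.mul_le_mul_left p hlen
        _ ≤ a := h1
  · obtain ⟨hu, _⟩ := eq_rep_of_pref hx
    rw [hu]
    simp [List.count_replicate]

lemma flatten_ok {p : ℕ} (m : ℕ) :
    prefOK p ((List.replicate m (List.replicate p false ++ [true])).flatten) := by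
  induction m with
  | zero =>
    intro u v h
    simp at h
    simp [h.1]
  | succ m ih =>
    rw [List.replicate_succ, List.flatten_cons]
    refine prefOK_append_exact ?_ ?_ ih
    · have := head_ok (p := p) (a := p) (b := 0) (c := 0) (by simp) (by simp)
      simpa using this
    · simp [List.count_append, List.count_replicate]

theorem alphaC_mem (n p k i j : ℕ) (hp : 1 ≤ p) (hn : (p + 1) * k ≤ n)
    (hi : i ≤ p - 1) (hj1 : 1 ≤ j) (hjk : j ≤ k) :
    (alphaC n p k i j).length = n ∧ (alphaC n p k i j).count true = k ∧
      prefOK p (alphaC n p k i j) := by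
  have hip : i < p := by omega
  have hppj : p ≤ p * j := Nat.le_mul_of_pos_right p hj1
  have hipj : i ≤ p * j := by omega
  refine ⟨?_, ?_, ?_⟩
  · simp [alphaC, List.length_append, List.length_replicate, List.length_flatten,
      List.map_replicate, List.sum_replicate, smul_eq_mul]
    zify [hipj, hj1, hjk, hn]
    ring
  · simp [alphaC, List.count_append, List.count_replicate, count_flatten_replicate]
    omega
  · have hrw : alphaC n p k i j =
        (List.replicate (p * j - i) false ++ (List.replicate (j - 1) true ++
          (List.replicate i false ++ [true]))) ++
        ((List.replicate (k - j) (List.replicate p false ++ [true])).flatten ++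
          List.replicate (n - (p + 1) * k) false) := by
      simp [alphaC, List.append_assoc]
    rw [hrw]
    refine prefOK_append_exact ?_ ?_ (prefOK_append_false (flatten_ok (k - j)))
    · refine head_ok ?_ ?_
      · zify [hj1, hipj]
        linarith
      · zify [hj1, hipj]
        linarith
    · simp [List.count_append, List.count_replicate]
      zify [hj1, hipj]
      ring
end

section
/- For n ≥ 2k and any α in F_n(2,k) with α ≠ γ_{n,k} = 0^{n-2k}(01)^k, the greedy homogeneous-transposition list started at α ends with γ_{n,k}. -/
/-- `L` is the list produced by the greedy Gray code algorithm for the set of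
words satisfying `P`, started at `α`: each step performs the homogeneous
transposition with leftmost possible `1` and then leftmost possible `0`
producing a word satisfying `P` not yet listed, and the process runs until
no further step is possible. -/
def IsGreedyList (P : List Bool → Prop) (α : List Bool) (L : List (List Bool)) : Prop :=
  L.head? = some α ∧ L.Nodup ∧ (∀ w ∈ L, P w) ∧
  (∀ m, m + 1 < L.length →
    ∃ i j, okT (L.getD m []) i j ∧ L.getD (m + 1) [] = applyT (L.getD m []) i j ∧
      ∀ i' j', okT (L.getD m []) i' j' → P (applyT (L.getD m []) i' j') →
        applyT (L.getD m []) i' j' ∉ L.take (m + 1) →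
        i < i' ∨ (i = i' ∧ j ≤ j')) ∧
  (∀ i j, okT (L.getD (L.length - 1) []) i j →
    P (applyT (L.getD (L.length - 1) []) i j) →
    applyT (L.getD (L.length - 1) []) i j ∈ L)

/-- `α` is a generator: the greedy list started at `α` exhausts the words satisfying `P`. -/
def IsGen (P : List Bool → Prop) (α : List Bool) : Prop :=
  P α ∧ ∃ L, IsGreedyList P α L ∧ ∀ w, P w → w ∈ L

def memF (n k : ℕ) (w : List Bool) : Prop :=
  w.length = n ∧ w.count true = k ∧ ¬ [true, true] <:+: w

/-- `γ_{n,k} = 0^{n-2k} (01)^k` -/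
def gammaF (n k : ℕ) : List Bool :=
  List.replicate (n - 2 * k) false ++ (List.replicate k [false, true]).flatten

namespace GG

lemma getD_true_lt {w : List Bool} {t : ℕ} (h : w.getD t false = true) : t < w.length := by
  by_contra hc
  rw [List.getD_eq_default _ _ (by omega)] at h
  exact Bool.false_ne_true h

lemma length_applyT (w : List Bool) (i j : ℕ) : (applyT w i j).length = w.length := by
  simp [applyT]

lemma apply_ne {w : List Bool} {i j : ℕ} (h : okT w i j) : i ≠ j := by
  intro he
  have h1 := h.2.2.1
  have h2 := h.2.2.2.1
  rw [he, h2] at h1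
  exact Bool.false_ne_true h1

lemma getD_applyT {w : List Bool} {i j : ℕ} (hij : i ≠ j) (hi : i < w.length)
    (hj : j < w.length) (t : ℕ) :
    (applyT w i j).getD t false =
      if t = j then true else if t = i then false else w.getD t false := by
  have hlen : (applyT w i j).length = w.length := length_applyT w i j
  by_cases ht : t < w.length
  · rw [List.getD_eq_getElem _ _ (by omega)]
    show ((w.set i false).set j true)[t]'(by simpa using ht) = _
    rw [List.getElem_set, List.getElem_set]
    split_ifs <;> first
      | rfl
      | omega
      | (rw [List.getD_eq_getElem _ _ ht])
      | (exfalso; omega)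
  · rw [List.getD_eq_default _ _ (by omega), List.getD_eq_default _ _ (by omega),
      if_neg (by omega), if_neg (by omega)]

lemma no11_iff (w : List Bool) :
    (¬ [true, true] <:+: w) ↔ ∀ t, ¬(w.getD t false = true ∧ w.getD (t+1) false = true) := by
  constructor
  · intro h t ⟨h1, h2⟩
    apply h
    have ht1 : t + 1 < w.length := getD_true_lt h2
    have ht : t < w.length := by omega
    refine ⟨w.take t, w.drop (t+2), ?_⟩
    have e1 : w.drop t = w[t] :: w.drop (t+1) := List.drop_eq_getElem_cons ht
    have e2 : w.drop (t+1) = w[t+1] :: w.drop (t+2) := List.drop_eq_getElem_cons ht1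
    rw [List.getD_eq_getElem _ _ ht] at h1
    rw [List.getD_eq_getElem _ _ ht1] at h2
    calc w.take t ++ [true, true] ++ w.drop (t+2)
        = w.take t ++ (w[t] :: w[t+1] :: w.drop (t+2)) := by rw [h1, h2]; simp
      _ = w.take t ++ w.drop t := by rw [e1, e2]
      _ = w := List.take_append_drop t w
  · rintro h ⟨s, t, rfl⟩
    apply h s.length
    constructor
    · rw [List.getD_append _ _ _ _ (by simp), List.getD_append_right _ _ _ _ (le_refl _)]
      simp
    · rw [List.getD_append _ _ _ _ (by simp),
        List.getD_append_right _ _ _ _ (by omega)]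
      have : s.length + 1 - s.length = 1 := by omega
      rw [this]
      simp

lemma count_set_true {l : List Bool} {n : ℕ} (hn : n < l.length) (h : l.getD n false = true) :
    (l.set n false).count true + 1 = l.count true := by
  rw [List.getD_eq_getElem _ _ hn] at h
  conv_rhs => rw [← List.take_append_drop n l, List.drop_eq_getElem_cons hn]
  rw [List.set_eq_take_append_cons_drop]
  simp only [hn, if_pos]
  simp [List.count_append, List.count_cons, h]
  omega

lemma count_set_false {l : List Bool} {n : ℕ} (hn : n < l.length) (h : l.getD n false = false) :
    (l.set n true).count true = l.count true + 1 := by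
  rw [List.getD_eq_getElem _ _ hn] at h
  conv_rhs => rw [← List.take_append_drop n l, List.drop_eq_getElem_cons hn]
  rw [List.set_eq_take_append_cons_drop]
  simp only [hn, if_pos]
  simp [List.count_append, List.count_cons, h]
  omega

lemma count_applyT {w : List Bool} {i j : ℕ} (h : okT w i j) :
    (applyT w i j).count true = w.count true := by
  have hij : i ≠ j := apply_ne h
  obtain ⟨hi, hj, hti, htj, -⟩ := h
  have h1 : (w.set i false).count true + 1 = w.count true := count_set_true hi hti
  have h2 : (w.set i false).getD j false = false := by
    rw [List.getD_eq_getElem _ _ (by simpa using hj), List.getElem_set, if_neg hij,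
      ← List.getD_eq_getElem _ _ hj]
    exact htj
  have h3 := count_set_false (l := w.set i false) (n := j) (by simpa using hj) h2
  unfold applyT
  omega

end GG

namespace GG

lemma flat_length (k : ℕ) : ((List.replicate k [false, true]).flatten).length = 2 * k := by
  induction k with
  | zero => simp
  | succ k ih => rw [List.replicate_succ, List.flatten_cons, List.length_append, ih]; simp; omega

lemma flat_getD (k s : ℕ) :
    ((List.replicate k [false, true]).flatten).getD s false = true ↔ s < 2*k ∧ s % 2 = 1 := by
  induction k generalizing s with
  | zero => simp
  | succ k ih =>
    rw [List.replicate_succ, List.flatten_cons]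
    match s with
    | 0 => simp
    | 1 => simp; omega
    | (s+2) =>
      show (false :: true :: _).getD (s+2) false = true ↔ _
      rw [List.getD_cons_succ, List.getD_cons_succ, show ([].append (List.replicate k [false, true]).flatten) = (List.replicate k [false, true]).flatten from rfl, ih]
      omega

lemma gamma_length {n k : ℕ} (hn : 2 * k ≤ n) : (gammaF n k).length = n := by
  rw [gammaF, List.length_append, List.length_replicate, flat_length]; omega

lemma gamma_true_iff {n k : ℕ} (hn : 2 * k ≤ n) (t : ℕ) :
    (gammaF n k).getD t false = true ↔
      n - 2*k < t ∧ t < n ∧ (t - (n - 2*k)) % 2 = 1 := by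
  rw [gammaF]
  by_cases ht : t < n - 2*k
  · rw [List.getD_append _ _ _ _ (by simpa using ht),
      List.getD_eq_getElem _ _ (by simpa using ht), List.getElem_replicate]
    simp
    omega
  · rw [List.getD_append_right _ _ _ _ (by simpa using ht), List.length_replicate, flat_getD]
    omega

lemma gamma_false {n k t : ℕ} (hn : 2 * k ≤ n)
    (h : t ≤ n - 2*k ∨ n ≤ t ∨ (t - (n - 2*k)) % 2 = 0) :
    (gammaF n k).getD t false = false := by
  cases hg : (gammaF n k).getD t false
  · rfl
  · rw [gamma_true_iff hn] at hg; omega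

lemma gamma_true {n k t : ℕ} (hn : 2 * k ≤ n)
    (h1 : n - 2*k < t) (h2 : t < n) (h3 : (t - (n - 2*k)) % 2 = 1) :
    (gammaF n k).getD t false = true := (gamma_true_iff hn t).2 ⟨h1, h2, h3⟩

lemma flat_count (k : ℕ) : ((List.replicate k [false, true]).flatten).count true = k := by
  induction k with
  | zero => simp
  | succ k ih => rw [List.replicate_succ, List.flatten_cons, List.count_append, ih]; simp; omega

lemma count_gamma (n k : ℕ) : (gammaF n k).count true = k := by
  rw [gammaF, List.count_append, List.count_replicate, flat_count]
  simp

lemma memF_gamma {n k : ℕ} (hn : 2 * k ≤ n) : memF n k (gammaF n k) := by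
  refine ⟨gamma_length hn, count_gamma n k, ?_⟩
  rw [no11_iff]
  rintro t ⟨h1, h2⟩
  rw [gamma_true_iff hn] at h1 h2
  omega

end GG

namespace GG

def TopDiff (n k : ℕ) (w : List Bool) (p : ℕ) : Prop :=
  w.getD p false ≠ (gammaF n k).getD p false ∧
    ∀ s, p < s → w.getD s false = (gammaF n k).getD s false

lemma eq_of_agree {w v : List Bool} (hl : w.length = v.length)
    (h : ∀ t, w.getD t false = v.getD t false) : w = v := by
  apply List.ext_getElem hl
  intro t h1 h2
  rw [← List.getD_eq_getElem w false h1, ← List.getD_eq_getElem v false h2]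
  exact h t

lemma drop_eq_of_agree {w v : List Bool} (hl : w.length = v.length) {p : ℕ}
    (h : ∀ s, p < s → w.getD s false = v.getD s false) : w.drop (p+1) = v.drop (p+1) := by
  apply List.ext_getElem (by simp [hl])
  intro t h1 h2
  have h1' : p + 1 + t < w.length := by simp at h1; omega
  have h2' : p + 1 + t < v.length := by simp at h2; omega
  rw [List.getElem_drop, List.getElem_drop, ← List.getD_eq_getElem w false h1',
    ← List.getD_eq_getElem v false h2']
  exact h _ (by omega)

lemma exists_topDiff {n k : ℕ} (hn : 2 * k ≤ n) {w : List Bool} (hw : memF n k w)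
    (hne : w ≠ gammaF n k) : ∃ p, TopDiff n k w p := by
  set P := fun q => ¬ (w.getD q false = (gammaF n k).getD q false) with hP
  have hex : ∃ q, P q := by
    by_contra hc
    push_neg at hc
    exact hne (eq_of_agree (by rw [hw.1, gamma_length hn]) (by simpa [hP] using hc))
  obtain ⟨q, hq⟩ := hex
  have hqn : q < n := by
    by_contra hc
    apply hq
    rw [List.getD_eq_default _ _ (by have := hw.1; omega),
      List.getD_eq_default _ _ (by have := gamma_length hn; omega)]
  refine ⟨Nat.findGreatest P n, Nat.findGreatest_spec (by omega) hq, ?_⟩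
  intro s hs
  by_cases hsn : s ≤ n
  · have := Nat.findGreatest_is_greatest (P := P) hs hsn
    simpa [hP] using this
  · rw [List.getD_eq_default _ _ (by have := hw.1; omega),
      List.getD_eq_default _ _ (by have := gamma_length hn; omega)]

lemma count_drop_gamma {n k p : ℕ} (hn : 2 * k ≤ n) (hp : p + 1 ≤ n - 2*k) :
    ((gammaF n k).drop (p+1)).count true = k := by
  have h1 : (gammaF n k).count true = k := count_gamma n k
  have h2 : (gammaF n k).take (p+1) = List.replicate (p+1) false := by
    rw [gammaF, List.take_append_of_le_length (by simpa using hp), List.take_replicate]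
    congr 1
    omega
  have h3 : (gammaF n k).count true =
      ((gammaF n k).take (p+1)).count true + ((gammaF n k).drop (p+1)).count true := by
    conv_lhs => rw [← List.take_append_drop (p+1) (gammaF n k)]
    rw [List.count_append]
  rw [h2] at h3
  simp [List.count_replicate] at h3
  omega

lemma topDiff_val {n k : ℕ} (hn : 2 * k ≤ n) (hk : 1 ≤ k) {w : List Bool} {p : ℕ}
    (hw : memF n k w) (hp : TopDiff n k w p) :
    (gammaF n k).getD p false = true ∧ w.getD p false = false ∧
      n - 2*k < p ∧ p < n ∧ (p - (n - 2*k)) % 2 = 1 := by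
  have hγ : (gammaF n k).getD p false = true := by
    cases hg : (gammaF n k).getD p false
    · -- gamma false at p, so w true at p: derive contradiction
      exfalso
      have hwp : w.getD p false = true := by
        cases hwp : w.getD p false
        · exact absurd (by rw [hwp, hg]) hp.1
        · rfl
      have hpn : p < n := hw.1 ▸ getD_true_lt hwp
      have hg' := hg
      rw [← Bool.not_eq_true, gamma_true_iff hn] at hg'
      push_neg at hg'
      -- p cannot be n-1
      have hpn1 : p < n - 1 := by
        rcases Nat.lt_or_ge p (n-1) with h | h
        · exact h
        · exfalso
          have : p = n - 1 := by omega
          have : (gammaF n k).getD p false = true := by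
            apply gamma_true hn <;> omega
          rw [this] at hg; exact Bool.false_ne_true hg.symm
      -- w at p+1 is false by no-11
      have hw1 : w.getD (p+1) false = false := by
        have := (no11_iff w).1 hw.2.2 p
        cases hx : w.getD (p+1) false
        · rfl
        · exact absurd ⟨hwp, hx⟩ this
      have hγ1 : (gammaF n k).getD (p+1) false = false := by
        rw [← hp.2 (p+1) (by omega)]; exact hw1
      rw [← Bool.not_eq_true, gamma_true_iff hn] at hγ1
      push_neg at hγ1
      -- deduce p + 1 ≤ n - 2k
      have hple : p + 1 ≤ n - 2*k := by
        by_contra hc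
        push_neg at hc
        rcases Nat.lt_or_ge (n - 2*k) p with h' | h'
        · -- p > m : both offsets even, impossible
          omega
        · -- p = m, then gamma (p+1) should be true
          have hpm : p = n - 2*k := by omega
          have : (gammaF n k).getD (p+1) false = true := by
            apply gamma_true hn <;> omega
          rw [← hp.2 (p+1) (by omega), hw1] at this
          exact Bool.false_ne_true this
      -- count contradiction
      have hdrop : w.drop (p+1) = (gammaF n k).drop (p+1) :=
        drop_eq_of_agree (by rw [hw.1, gamma_length hn]) hp.2
      have hcw : w.count true = k := hw.2.1
      have h1 : true ∈ w.take (p+1) := by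
        rw [List.mem_take_iff_getElem]
        refine ⟨p, by rw [hw.1]; omega, ?_⟩
        rw [← List.getD_eq_getElem w false (by have := hw.1; omega : p < w.length)]
        exact hwp
      have h2 : 0 < (w.take (p+1)).count true := List.count_pos_iff.2 h1
      have h3 : w.count true = (w.take (p+1)).count true + (w.drop (p+1)).count true := by
        conv_lhs => rw [← List.take_append_drop (p+1) w]
        rw [List.count_append]
      rw [hdrop, count_drop_gamma hn hple] at h3
      omega
    · rfl
  have hwp : w.getD p false = false := by
    cases hwp : w.getD p false
    · rfl
    · exact absurd (by rw [hwp, hγ]) hp.1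
  have := (gamma_true_iff hn p).1 hγ
  exact ⟨hγ, hwp, this.1, this.2.1, this.2.2⟩

lemma exists_true_below {n k : ℕ} (hn : 2 * k ≤ n) (hk : 1 ≤ k) {w : List Bool} {p : ℕ}
    (hw : memF n k w) (hp : TopDiff n k w p) : ∃ i, i < p ∧ w.getD i false = true := by
  obtain ⟨hγ, hwp, hm, hpn, hodd⟩ := topDiff_val hn hk hw hp
  have hdrop : w.drop (p+1) = (gammaF n k).drop (p+1) :=
    drop_eq_of_agree (by rw [hw.1, gamma_length hn]) hp.2
  have hlen : w.length = n := hw.1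
  have hγlen : (gammaF n k).length = n := gamma_length hn
  -- counts of take (p+1)
  have h3 : w.count true = (w.take (p+1)).count true + (w.drop (p+1)).count true := by
    conv_lhs => rw [← List.take_append_drop (p+1) w]
    rw [List.count_append]
  have h4 : (gammaF n k).count true =
      ((gammaF n k).take (p+1)).count true + ((gammaF n k).drop (p+1)).count true := by
    conv_lhs => rw [← List.take_append_drop (p+1) (gammaF n k)]
    rw [List.count_append]
  have h5 : (w.take (p+1)).count true = (w.take p).count true := by
    rw [List.take_succ]
    rw [List.count_append]
    have : w[p]? = some false := by
      rw [List.getElem?_eq_getElem (by have := hw.1; omega : p < w.length),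
        ← List.getD_eq_getElem w false (by have := hw.1; omega : p < w.length), hwp]
    rw [this]
    simp
  have h6 : ((gammaF n k).take (p+1)).count true = ((gammaF n k).take p).count true + 1 := by
    rw [List.take_succ]
    rw [List.count_append]
    have : (gammaF n k)[p]? = some true := by
      rw [List.getElem?_eq_getElem (by have := gamma_length hn; omega : p < (gammaF n k).length),
        ← List.getD_eq_getElem (gammaF n k) false (by have := gamma_length hn; omega : p < (gammaF n k).length), hγ]
    rw [this]
    simp
  have hcount : 0 < (w.take p).count true := by
    rw [hw.2.1] at h3
    rw [count_gamma] at h4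
    rw [hdrop] at h3
    omega
  obtain ⟨x, hx, hmem⟩ := List.count_pos_iff.1 hcount |> (by
    intro h; exact List.mem_take_iff_getElem.1 h : true ∈ w.take p → _)
  refine ⟨x, by omega, ?_⟩
  rw [← List.getD_eq_getElem w false (by have := hw.1; have := (List.length_take : (List.take p w).length = min p w.length); omega : x < w.length)] at hmem
  exact hmem

end GG

namespace GG

lemma bmove {n k : ℕ} (hn : 2 * k ≤ n) (hk : 1 ≤ k) {w : List Bool} {p : ℕ}
    (hw : memF n k w) (hp : TopDiff n k w p) :
    ∃ i, i < p ∧ w.getD i false = true ∧ okT w i p ∧ memF n k (applyT w i p) ∧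
      (∀ s, p ≤ s → (applyT w i p).getD s false = (gammaF n k).getD s false) := by
  obtain ⟨hγ, hwp, hm, hpn, hodd⟩ := topDiff_val hn hk hw hp
  obtain ⟨i0, hi0p, hi0⟩ := exists_true_below hn hk hw hp
  obtain ⟨i, hspec, hilt, hgr⟩ : ∃ i, w.getD i false = true ∧ i ≤ p - 1 ∧
      ∀ t, i < t → t ≤ p - 1 → ¬ (w.getD t false = true) :=
    ⟨Nat.findGreatest (fun i => w.getD i false = true) (p-1),
      Nat.findGreatest_spec (P := fun i => w.getD i false = true) (n := p-1) (m := i0) (by omega) hi0,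
      Nat.findGreatest_le (P := fun i => w.getD i false = true) _,
      fun t h1 h2 => Nat.findGreatest_is_greatest (P := fun i => w.getD i false = true) h1 h2⟩
  have hip : i < p := by omega
  have hbetween : ∀ t, i < t → t < p → w.getD t false = false := by
    intro t h1 h2
    cases hx : w.getD t false
    · rfl
    · exact absurd hx (hgr t h1 (by omega))
  have hwl : w.length = n := hw.1
  have hok : okT w i p := by
    refine ⟨getD_true_lt hspec, by omega, hspec, hwp, ?_⟩
    intro t h1 h2
    rw [min_eq_left (by omega : i ≤ p)] at h1
    rw [max_eq_right (by omega : i ≤ p)] at h2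
    exact hbetween t h1 h2
  have hij : i ≠ p := by omega
  have hval := getD_applyT hij (getD_true_lt hspec) (by omega : p < w.length)
  refine ⟨i, hip, hspec, hok, ⟨by rw [length_applyT]; exact hwl,
    by rw [count_applyT hok]; exact hw.2.1, ?_⟩, ?_⟩
  · -- no 11
    rw [no11_iff]
    rintro t ⟨h1, h2⟩
    rw [hval t] at h1
    rw [hval (t+1)] at h2
    by_cases ht : t = p
    · -- then position p+1 must be false
      rw [if_neg (by omega), if_neg (by omega)] at h2
      have : w.getD (t+1) false = (gammaF n k).getD (t+1) false := hp.2 (t+1) (by omega)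
      rw [this] at h2
      rw [gamma_true_iff hn] at h2
      omega
    · by_cases ht1 : t + 1 = p
      · -- position t = p - 1 : either i or between
        rw [if_neg ht, if_pos ht1] at *
        by_cases hti : t = i
        · rw [if_pos hti] at h1; exact Bool.false_ne_true h1
        · rw [if_neg hti] at h1
          have : i < t := by omega
          rw [hbetween t this (by omega)] at h1
          exact Bool.false_ne_true h1
      · rw [if_neg ht1] at h2
        by_cases hti1 : t + 1 = i
        · rw [if_pos hti1] at h2; exact Bool.false_ne_true h2
        · rw [if_neg hti1] at h2
          by_cases hti : t = i
          · rw [if_neg ht, if_pos hti] at h1; exact Bool.false_ne_true h1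
          · rw [if_neg ht, if_neg hti] at h1
            exact (no11_iff w).1 hw.2.2 t ⟨h1, h2⟩
  · -- agreement at ≥ p
    intro s hs
    rw [hval s]
    rcases Nat.eq_or_lt_of_le hs with h | h
    · rw [if_pos h.symm, ← h, hγ]
    · rw [if_neg (by omega), if_neg (by omega)]
      exact hp.2 s h

end GG

namespace GG

/-- `σ_j`: γ with its first 1 (at position m+1) moved to `j ≤ m`. -/
def sg (n k j : ℕ) : List Bool := applyT (gammaF n k) (n - 2*k + 1) j

section Sigma
variable {n k : ℕ} (hn : 2 * k ≤ n) (hk : 1 ≤ k)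
include hn hk

lemma m1_lt : n - 2*k + 1 < n := by omega

lemma gamma_m1 : (gammaF n k).getD (n - 2*k + 1) false = true :=
  gamma_true hn (by omega) (by omega) (by omega)

lemma gamma_le_m {j : ℕ} (hj : j ≤ n - 2*k) : (gammaF n k).getD j false = false :=
  gamma_false hn (by omega)

lemma sg_getD {j : ℕ} (hj : j ≤ n - 2*k) (t : ℕ) :
    (sg n k j).getD t false =
      if t = j then true else if t = n - 2*k + 1 then false
      else (gammaF n k).getD t false := by
  rw [sg, getD_applyT (by omega) (by rw [gamma_length hn]; omega)
    (by rw [gamma_length hn]; omega)]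

lemma okT_gamma_sg {j : ℕ} (hj : j ≤ n - 2*k) : okT (gammaF n k) (n - 2*k + 1) j := by
  refine ⟨by rw [gamma_length hn]; omega, by rw [gamma_length hn]; omega,
    gamma_m1 hn hk, gamma_le_m hn hk hj, ?_⟩
  intro t h1 h2
  rw [min_comm, min_eq_left (by omega), max_eq_left (by omega)] at *
  exact gamma_false hn (by omega)

lemma length_sg {j : ℕ} : (sg n k j).length = n := by
  rw [sg, length_applyT, gamma_length hn]

lemma memF_sg {j : ℕ} (hj : j ≤ n - 2*k) : memF n k (sg n k j) := by
  refine ⟨length_sg hn hk, ?_, ?_⟩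
  · rw [sg, count_applyT (okT_gamma_sg hn hk hj), count_gamma]
  · rw [no11_iff]
    rintro t ⟨h1, h2⟩
    rw [sg_getD hn hk hj] at h1 h2
    by_cases e1 : t = j
    · rw [if_neg (by omega)] at h2
      by_cases e4 : t + 1 = n - 2*k + 1
      · rw [if_pos e4] at h2; exact Bool.false_ne_true h2
      · rw [if_neg e4, gamma_true_iff hn] at h2; omega
    · rw [if_neg e1] at h1
      by_cases e2 : t = n - 2*k + 1
      · rw [if_pos e2] at h1; exact Bool.false_ne_true h1
      · rw [if_neg e2, gamma_true_iff hn] at h1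
        by_cases e3 : t + 1 = j
        · omega
        · rw [if_neg e3] at h2
          by_cases e4 : t + 1 = n - 2*k + 1
          · omega
          · rw [if_neg e4, gamma_true_iff hn] at h2
            omega

lemma class1 {w' : List Bool} {i j : ℕ} (hw' : memF n k w') (hok : okT w' i j)
    (happ : applyT w' i j = gammaF n k) :
    j = n - 2*k + 1 ∧ i ≤ n - 2*k ∧ w' = sg n k i := by
  have hij : i ≠ j := apply_ne hok
  obtain ⟨hi, hjl, hti, htj, hbet⟩ := hok
  have hwl : w'.length = n := hw'.1
  have hval : ∀ t, (gammaF n k).getD t false =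
      if t = j then true else if t = i then false else w'.getD t false := by
    intro t
    rw [← happ, getD_applyT hij hi hjl]
  have hγj : (gammaF n k).getD j false = true := by rw [hval j, if_pos rfl]
  have hγi : (gammaF n k).getD i false = false := by
    rw [hval i, if_neg hij, if_pos rfl]
  have hagree : ∀ t, t ≠ i → t ≠ j → w'.getD t false = (gammaF n k).getD t false := by
    intro t h1 h2
    rw [hval t, if_neg h2, if_neg h1]
  have no11w : ∀ t, ¬(w'.getD t false = true ∧ w'.getD (t+1) false = true) :=
    (no11_iff w').1 hw'.2.2
  rw [gamma_true_iff hn] at hγj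
  have hγif := hγi
  rw [← Bool.not_eq_true, gamma_true_iff hn] at hγif
  push_neg at hγif
  -- j = m + 1
  have hj1 : j = n - 2*k + 1 := by
    by_contra hc
    have hj3 : n - 2*k + 3 ≤ j := by omega
    have hg2 : (gammaF n k).getD (j-2) false = true := gamma_true hn (by omega) (by omega) (by omega)
    have hine : j - 2 ≠ i := by
      intro he
      rw [← he] at hγi
      rw [hγi] at hg2
      exact Bool.false_ne_true hg2
    have hw2 : w'.getD (j-2) false = true := by
      rw [hagree (j-2) hine (by omega)]
      exact hg2
    rcases Nat.lt_or_ge i j with hij' | hij'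
    · -- i < j
      have hii : i = j - 1 := by
        by_contra hc2
        have : i < j - 2 := by
          rcases Nat.lt_or_ge i (j-2) with h | h
          · exact h
          · omega
        have := hbet (j-2) (by rw [min_eq_left (by omega)]; omega)
          (by rw [max_eq_right (by omega)]; omega)
        rw [this] at hw2; exact Bool.false_ne_true hw2
      apply no11w (j-2)
      have : j - 2 + 1 = j - 1 := by omega
      rw [this, ← hii]
      exact ⟨hw2, hti⟩
    · -- i > j
      have hjn : j + 2 < n := by
        rcases Nat.lt_or_ge (j+2) n with h | h
        · exact h
        · exfalso
          have : j = n - 1 ∨ j = n - 2 := by omega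
          rcases this with h' | h'
          · omega
          · omega
      have hg2' : (gammaF n k).getD (j+2) false = true := gamma_true hn (by omega) (by omega) (by omega)
      have hii : i = j + 1 := by
        by_contra hc2
        have hine : i ≠ j + 2 := by
          intro he; rw [he] at hγi; rw [hγi] at hg2'; exact Bool.false_ne_true hg2'
        have hlt : j + 2 < i := by omega
        have hw2' : w'.getD (j+2) false = true := by
          rw [hagree (j+2) (by omega) (by omega)]; exact hg2'
        have := hbet (j+2) (by rw [min_eq_right (by omega)]; omega)
          (by rw [max_eq_left (by omega)]; omega)
        rw [this] at hw2'; exact Bool.false_ne_true hw2'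
      apply no11w (j+1)
      constructor
      · rw [← hii]; exact hti
      · have : j + 1 + 1 = j + 2 := by omega
        rw [this, hagree (j+2) (by omega) (by omega)]
        exact hg2'
  subst hj1
  -- i ≤ m
  have hi2 : i ≤ n - 2*k := by
    by_contra hc
    push_neg at hc
    have hin : i < n := by rw [← hwl]; exact hi
    have hieven : (i - (n - 2*k)) % 2 = 0 := by
      have := hγif (by omega) hin
      omega
    by_cases hi4 : i = n - 2*k + 2
    · -- use i+1 = m+3
      have hk2 : 2 ≤ k := by
        by_contra hk1
        have : n - 2*k + 2 = n := by omega
        omega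
      have hg3 : (gammaF n k).getD (n - 2*k + 3) false = true :=
        gamma_true hn (by omega) (by omega) (by omega)
      apply no11w i
      refine ⟨hti, ?_⟩
      have e : i + 1 = n - 2*k + 3 := by omega
      rw [e, hagree _ (by omega) (by omega)]
      exact hg3
    · -- i ≥ m+4 : use i-1
      have hg3 : (gammaF n k).getD (i-1) false = true :=
        gamma_true hn (by omega) (by omega) (by omega)
      apply no11w (i-1)
      constructor
      · rw [hagree _ (by omega) (by omega)]; exact hg3
      · have e : i - 1 + 1 = i := by omega
        rw [e]; exact hti
  refine ⟨rfl, hi2, ?_⟩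
  apply eq_of_agree (by rw [hwl, length_sg hn hk])
  intro t
  rw [sg_getD hn hk hi2 t]
  by_cases e1 : t = i
  · rw [if_pos e1, e1]; exact hti
  · rw [if_neg e1]
    by_cases e2 : t = n - 2*k + 1
    · rw [if_pos e2, e2]; exact htj
    · rw [if_neg e2, hagree t e1 e2]

lemma class2 {i j : ℕ} (hok : okT (gammaF n k) i j)
    (hmem : memF n k (applyT (gammaF n k) i j)) :
    i = n - 2*k + 1 ∧ j ≤ n - 2*k := by
  have hij : i ≠ j := apply_ne hok
  obtain ⟨hi, hjl, hti, htj, hbet⟩ := hok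
  rw [gamma_length hn] at hi hjl
  have hval := getD_applyT hij (by rw [gamma_length hn]; omega : i < (gammaF n k).length)
    (by rw [gamma_length hn]; omega : j < (gammaF n k).length)
  have no11v : ∀ t, ¬((applyT (gammaF n k) i j).getD t false = true ∧
      (applyT (gammaF n k) i j).getD (t+1) false = true) := (no11_iff _).1 hmem.2.2
  have hγi := (gamma_true_iff hn i).1 hti
  have hγjf := htj
  rw [← Bool.not_eq_true, gamma_true_iff hn] at hγjf
  push_neg at hγjf
  have hi1 : i = n - 2*k + 1 := by
    by_contra hc
    have hi3 : n - 2*k + 3 ≤ i := by omega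
    have hg2 : (gammaF n k).getD (i-2) false = true := gamma_true hn (by omega) (by omega) (by omega)
    rcases Nat.lt_or_ge j i with h' | h'
    · -- j < i
      have hjj : j = i - 1 := by
        by_contra hc2
        have : j < i - 2 := by
          rcases Nat.lt_or_ge j (i-2) with h | h
          · exact h
          · have : j = i - 2 := by
              rcases Nat.eq_or_lt_of_le h with h2 | h2
              · exact h2.symm
              · omega
            rw [this] at htj; rw [htj] at hg2; exact (Bool.false_ne_true hg2).elim
        have := hbet (i-2) (by rw [min_eq_right (by omega)]; omega)
          (by rw [max_eq_left (by omega)]; omega)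
        rw [this] at hg2; exact Bool.false_ne_true hg2
      apply no11v (i-2)
      constructor
      · rw [hval, if_neg (by omega), if_neg (by omega)]; exact hg2
      · have e : i - 2 + 1 = j := by omega
        rw [e, hval, if_pos rfl]
    · -- j > i
      have hin : i + 2 < n := by
        rcases Nat.lt_or_ge (i+2) n with h | h
        · exact h
        · exfalso
          have : i = n - 1 ∨ i = n - 2 := by omega
          rcases this with h2 | h2
          · omega
          · omega
      have hg2' : (gammaF n k).getD (i+2) false = true := gamma_true hn (by omega) (by omega) (by omega)
      have hjj : j = i + 1 := by
        by_contra hc2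
        have hjne : j ≠ i + 2 := by
          intro he; rw [he] at htj; rw [htj] at hg2'; exact Bool.false_ne_true hg2'
        have := hbet (i+2) (by rw [min_eq_left (by omega)]; omega)
          (by rw [max_eq_right (by omega)]; omega)
        rw [this] at hg2'; exact Bool.false_ne_true hg2'
      apply no11v (i+1)
      constructor
      · rw [hval, if_pos (by omega)]
      · rw [hval, if_neg (by omega), if_neg (by omega)]
        have e : i + 1 + 1 = i + 2 := by omega
        rw [e]; exact hg2'
  subst hi1
  refine ⟨rfl, ?_⟩
  by_contra hc
  push_neg at hc
  have hjeven : (j - (n - 2*k)) % 2 = 0 := by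
    have := hγjf (by omega) (by omega)
    omega
  by_cases hj2 : j = n - 2*k + 2
  · have hk2 : 2 ≤ k := by
      by_contra hk1
      have : n - 2*k + 2 = n := by omega
      omega
    have hg3 : (gammaF n k).getD (n - 2*k + 3) false = true :=
      gamma_true hn (by omega) (by omega) (by omega)
    apply no11v j
    constructor
    · rw [hval, if_pos rfl]
    · rw [hval, if_neg (by omega), if_neg (by omega)]
      have e : j + 1 = n - 2*k + 3 := by omega
      rw [e]; exact hg3
  · -- j ≥ m + 4, between contains m+3
    have hg3 : (gammaF n k).getD (n - 2*k + 3) false = true :=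
      gamma_true hn (by omega) (by omega) (by omega)
    have := hbet (n - 2*k + 3) (by rw [min_eq_left (by omega)]; omega)
      (by rw [max_eq_right (by omega)]; omega)
    rw [this] at hg3; exact Bool.false_ne_true hg3

lemma okT_sg {i j : ℕ} (hi : i ≤ n - 2*k) (hj : j ≤ n - 2*k) (hij : i ≠ j) :
    okT (sg n k i) i j := by
  refine ⟨by rw [length_sg hn hk]; omega, by rw [length_sg hn hk]; omega, ?_, ?_, ?_⟩
  · rw [sg_getD hn hk hi, if_pos rfl]
  · rw [sg_getD hn hk hi, if_neg (Ne.symm hij), if_neg (by omega)]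
    exact gamma_le_m hn hk hj
  · intro t h1 h2
    rw [sg_getD hn hk hi, if_neg (by omega), if_neg (by omega)]
    exact gamma_false hn (by omega)

lemma applyT_sg {i j : ℕ} (hi : i ≤ n - 2*k) (hj : j ≤ n - 2*k) (hij : i ≠ j) :
    applyT (sg n k i) i j = sg n k j := by
  apply eq_of_agree (by rw [length_applyT, length_sg hn hk, length_sg hn hk])
  intro t
  rw [getD_applyT hij (by rw [length_sg hn hk]; omega) (by rw [length_sg hn hk]; omega),
    sg_getD hn hk hj t, sg_getD hn hk hi t]
  by_cases e1 : t = j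
  · rw [if_pos e1, if_pos e1]
  · rw [if_neg e1, if_neg e1]
    by_cases e2 : t = i
    · rw [if_pos e2, if_neg (show ¬ t = n - 2*k + 1 by omega)]
      rw [e2]
      exact (gamma_le_m hn hk hi).symm
    · rw [if_neg e2, if_neg e2]

end Sigma
end GG

namespace GG

lemma getD_mem_take {L : List (List Bool)} {r s : ℕ} (hr : r < s) (hrl : r < L.length) :
    L.getD r [] ∈ L.take s := by
  rw [List.getD_eq_getElem _ _ hrl]
  exact List.mem_take_iff_getElem.2 ⟨r, by omega, rfl⟩

lemma mem_take_getD {L : List (List Bool)} {s : ℕ} {x : List Bool} (h : x ∈ L.take s) :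
    ∃ r, r < s ∧ r < L.length ∧ L.getD r [] = x := by
  obtain ⟨r, hr, hx⟩ := List.mem_take_iff_getElem.1 h
  exact ⟨r, by omega, by omega, by rw [List.getD_eq_getElem _ _ (by omega)]; exact hx⟩

lemma mem_getD {L : List (List Bool)} {x : List Bool} (h : x ∈ L) :
    ∃ r, r < L.length ∧ L.getD r [] = x := by
  obtain ⟨r, hr, hx⟩ := List.mem_iff_getElem.1 h
  exact ⟨r, hr, by rw [List.getD_eq_getElem _ _ hr]; exact hx⟩

end GG

theorem greedy_ends_with_gamma (n k : ℕ) (hn : 2 * k ≤ n) (α : List Bool)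
    (hα : memF n k α) (hne : α ≠ gammaF n k) :
    ∀ L : List (List Bool), IsGreedyList (memF n k) α L →
      L.getLast? = some (gammaF n k) := by
  -- first, k ≥ 1
  have hk : 1 ≤ k := by
    by_contra hk0
    have hk0' : k = 0 := by omega
    apply hne
    subst hk0'
    apply GG.eq_of_agree (by rw [hα.1, GG.gamma_length hn])
    intro t
    rw [GG.gamma_false hn (by omega)]
    cases hx : α.getD t false
    · rfl
    · exfalso
      have htl : t < α.length := GG.getD_true_lt hx
      have : true ∈ α := by
        rw [List.getD_eq_getElem _ _ htl] at hx
        rw [← hx]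
        exact List.getElem_mem htl
      have := List.count_pos_iff.2 this
      rw [hα.2.1] at this
      omega
  intro L hL
  obtain ⟨hhead, hnodup, hmem, hstep, hstop⟩ := hL
  have hLne : L ≠ [] := by
    intro h; rw [h] at hhead; simp at hhead
  have hlen0 : 0 < L.length := List.length_pos_iff.2 hLne
  have memL : ∀ t, t < L.length → memF n k (L.getD t []) := by
    intro t ht
    apply hmem
    rw [List.getD_eq_getElem _ _ ht]
    exact List.getElem_mem ht
  have hα0 : L.getD 0 [] = α := by
    cases L with
    | nil => simp at hhead
    | cons a l => simp at hhead; rw [hhead]; rfl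
  -- Lemma D : gamma can only be the last element
  have gamma_last : ∀ t, t < L.length → L.getD t [] = gammaF n k → t = L.length - 1 := by
    intro t ht hγt
    by_contra hne'
    have ht1 : t + 1 < L.length := by omega
    -- t cannot be 0
    rcases Nat.eq_zero_or_pos t with ht0 | ht0
    · subst ht0; rw [hα0] at hγt; exact hne hγt
    -- analyze step t-1 → t
    obtain ⟨i, j, hok, happ, hlex⟩ := hstep (t-1) (by omega)
    rw [show t - 1 + 1 = t from by omega] at happ hlex
    rw [hγt] at happ
    obtain ⟨hj1, hile, hwsg⟩ := GG.class1 hn hk (memL (t-1) (by omega)) hok happ.symm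
    -- all sigma words are in L.take t
    have hsig : ∀ j', j' ≤ n - 2*k → GG.sg n k j' ∈ L.take t := by
      intro j' hj'
      by_cases hji : j' = i
      · subst hji
        rw [← hwsg]
        exact GG.getD_mem_take (by omega) (by omega)
      · by_contra hnotin
        have hok' : okT (L.getD (t-1) []) i j' := by
          rw [hwsg]; exact GG.okT_sg hn hk hile hj' (fun he => hji he.symm)
        have happ' : applyT (L.getD (t-1) []) i j' = GG.sg n k j' := by
          rw [hwsg]; exact GG.applyT_sg hn hk hile hj' (fun he => hji he.symm)
        have hmemsg : memF n k (applyT (L.getD (t-1) []) i j') := by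
          rw [happ']; exact GG.memF_sg hn hk hj'
        have := hlex i j' hok' hmemsg (by rw [happ']; exact hnotin)
        rcases this with h | ⟨-, h⟩
        · omega
        · omega
    -- now the step t → t+1 must revisit a sigma word
    obtain ⟨i₂, j₂, hok₂, happ₂, -⟩ := hstep t ht1
    rw [hγt] at hok₂ happ₂
    have hmem₂ : memF n k (applyT (gammaF n k) i₂ j₂) := by
      rw [← happ₂]; exact memL (t+1) ht1
    obtain ⟨hi₂, hj₂⟩ := GG.class2 hn hk hok₂ hmem₂
    have hsg₂ : L.getD (t+1) [] = GG.sg n k j₂ := by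
      rw [happ₂, hi₂]; rfl
    obtain ⟨r, hrt, hrl, hre⟩ := GG.mem_take_getD (hsig j₂ hj₂)
    have : r = t + 1 := by
      rw [List.getD_eq_getElem _ _ hrl] at hre
      rw [List.getD_eq_getElem _ _ ht1] at hsg₂
      exact (hnodup.getElem_inj_iff).1 (by rw [hre, hsg₂])
    omega
  -- Lemma C : top mismatch positions are non-increasing
  have chainC : ∀ t, t < L.length → ∀ p, GG.TopDiff n k (L.getD t []) p →
      ∀ r, r ≤ t → ∃ q, p ≤ q ∧ GG.TopDiff n k (L.getD r []) q := by
    intro t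
    induction t with
    | zero =>
      intro ht p hp r hr
      have : r = 0 := by omega
      subst this
      exact ⟨p, le_refl p, hp⟩
    | succ t ih =>
      intro ht1 p' hp' r hr
      have htlen : t < L.length := by omega
      have hne_t : L.getD t [] ≠ gammaF n k := by
        intro he
        have := gamma_last t htlen he
        omega
      obtain ⟨p, hp⟩ := GG.exists_topDiff hn (memL t htlen) hne_t
      obtain ⟨is, hisp, histrue, hokS, hmemS, hagreeS⟩ := GG.bmove hn hk (memL t htlen) hp
      have hnot : applyT (L.getD t []) is p ∉ L.take (t+1) := by
        intro hmemtake
        obtain ⟨r', hr't, hr'l, hr'e⟩ := GG.mem_take_getD hmemtake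
        obtain ⟨q, hq, hqd⟩ := ih htlen p hp r' (by omega)
        apply hqd.1
        rw [hr'e]
        exact hagreeS q hq
      obtain ⟨i, j, hok, happ, hlex⟩ := hstep t ht1
      have hchoice := hlex is p hokS hmemS hnot
      have hilt : i < p ∧ j ≤ p := by
        rcases hchoice with h | ⟨h1, h2⟩
        · constructor
          · omega
          · by_contra hjp
            push_neg at hjp
            have hij : i < j := by omega
            have := hok.2.2.2.2 is (by rw [min_eq_left (by omega)]; omega)
              (by rw [max_eq_right (by omega)]; omega)
            rw [this] at histrue
            exact Bool.false_ne_true histrue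
        · constructor
          · omega
          · omega
      have hagree1 : ∀ s, p < s → (L.getD (t+1) []).getD s false =
          (gammaF n k).getD s false := by
        intro s hs
        rw [happ, GG.getD_applyT (GG.apply_ne hok) hok.1 hok.2.1,
          if_neg (by omega), if_neg (by omega)]
        exact hp.2 s hs
      have hp'le : p' ≤ p := by
        by_contra hc
        push_neg at hc
        exact hp'.1 (hagree1 p' hc)
      rcases Nat.eq_or_lt_of_le hr with he | hlt
      · subst he
        exact ⟨p', le_refl p', hp'⟩
      · obtain ⟨q, hq, hqd⟩ := ih htlen p hp r (by omega)
        exact ⟨q, by omega, hqd⟩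
  -- Final argument
  have hT : L.length - 1 < L.length := by omega
  have hlast : L.getD (L.length - 1) [] = gammaF n k := by
    by_contra hne'
    obtain ⟨p, hp⟩ := GG.exists_topDiff hn (memL _ hT) hne'
    obtain ⟨is, hisp, histrue, hokS, hmemS, hagreeS⟩ := GG.bmove hn hk (memL _ hT) hp
    have hmem' := hstop is p hokS hmemS
    obtain ⟨r, hrl, hre⟩ := GG.mem_getD hmem'
    obtain ⟨q, hq, hqd⟩ := chainC (L.length - 1) hT p hp r (by omega)
    apply hqd.1
    rw [hre]
    exact hagreeS q hq
  rw [List.getLast?_eq_getLast hLne, List.getLast_eq_getElem]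
  rw [List.getD_eq_getElem _ _ hT] at hlast
  rw [hlast]
end
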